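/- arXiv:math/0612691 — 3 statements merged into one kernel-verified Lean document; each statement's English description precedes it below -/
import Mathlib

section
/- For integers 1 ≤ n ≤ k define a_n^{(k)} := (−1)^{k−n} Σ_{1 ≤ j₁ < ⋯ < j_{k−n} ≤ k−1} ∏_{q=1}^{k−n} j_q. Let n ≥ 1 be an integer and let φ̃ : (0,∞) → ℝ be a nonnegative measurable function such that ∫₀^∞ ξ^{max(n,1)} φ̃(ξ) dξ < ∞ (i.e. ∫₀^∞ ξ φ̃(ξ) dξ < ∞ if n = 1, and ∫₀^∞ ξⁿ φ̃(ξ) dξ < ∞ if n ≥ 2). For k ≥ max(n,2) set 𝔖_k := ∫₀^∞ φ̃(ξ)(−1 + e^{−ξ})^{k} dξ, which is finite. Then the series 𝔈_n := Σ_{k=max(n,2)}^{∞} (a_n^{(k)}/k!) 𝔖_k converges absolutely, and 𝔈_n = −∫₀^∞ φ̃(ξ)(e^{−ξ} − 1 + ξ) dξ if n = 1, while 𝔈_n = (−1)^{n} (1/n!) ∫₀^∞ φ̃(ξ) ξⁿ dξ if n ≥ 2. -/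
open MeasureTheory Real Set

/-- The coefficients `a_n^{(k)} = (-1)^{k-n} ∑_{1 ≤ j₁ < ⋯ < j_{k-n} ≤ k-1} ∏ j_q`
(signed Stirling numbers of the first kind). -/
noncomputable def acoef (n k : ℕ) : ℝ :=
  (-1:ℝ)^(k-n) * ∑ s ∈ (Finset.Icc 1 (k-1)).powersetCard (k-n), ∏ j ∈ s, (j:ℝ)

namespace Prop2Aux


noncomputable def Cc (n k : ℕ) : ℝ :=
  if n ≤ k then ∑ s ∈ (Finset.Icc 1 (k-1)).powersetCard (k-n), ∏ j ∈ s, (j:ℝ) else 0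

lemma Cc_nonneg (n k : ℕ) : 0 ≤ Cc n k := by
  unfold Cc
  split
  · exact Finset.sum_nonneg fun s _ => Finset.prod_nonneg fun j _ => by positivity
  · exact le_refl _

lemma Cc_of_lt {n k : ℕ} (h : k < n) : Cc n k = 0 := if_neg (by omega)

lemma Cc_self (n : ℕ) : Cc n n = 1 := by
  unfold Cc
  rw [if_pos le_rfl, Nat.sub_self, Finset.powersetCard_zero]
  simp

lemma Cc_zero (k : ℕ) : Cc 0 k = if k = 0 then 1 else 0 := by
  rcases Nat.eq_zero_or_pos k with h | h
  · subst h; simpa using Cc_self 0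
  · rw [if_neg (by omega)]
    unfold Cc
    rw [if_pos (Nat.zero_le _), Nat.sub_zero,
      Finset.powersetCard_eq_empty.2 (by rw [Nat.card_Icc]; omega), Finset.sum_empty]

lemma Cc_rec (n k : ℕ) : Cc (n+1) (k+1) = Cc n k + k * Cc (n+1) k := by
  rcases lt_trichotomy k n with h | h | h
  · rw [Cc_of_lt (by omega), Cc_of_lt h, Cc_of_lt (by omega)]; ring
  · subst h
    rw [Cc_self, Cc_self, Cc_of_lt (by omega)]; ring
  · have hk : 1 ≤ k := by omega
    obtain ⟨j, hj⟩ : ∃ j, k - n = j + 1 := ⟨k - n - 1, by omega⟩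
    unfold Cc
    rw [if_pos (by omega), if_pos (by omega), if_pos (by omega),
      show (k+1) - (n+1) = j + 1 by omega, show k - (n+1) = j by omega, hj,
      show (k+1) - 1 = k from rfl]
    have hknot : k ∉ Finset.Icc 1 (k-1) := by
      simp only [Finset.mem_Icc]; omega
    have hins : Finset.Icc 1 k = insert k (Finset.Icc 1 (k-1)) := by
      ext x; simp only [Finset.mem_Icc, Finset.mem_insert]; omega
    rw [hins, Finset.powersetCard_succ_insert hknot]
    have hdisj : Disjoint ((Finset.Icc 1 (k-1)).powersetCard (j+1))
        (((Finset.Icc 1 (k-1)).powersetCard j).image (insert k)) := by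
      rw [Finset.disjoint_left]
      intro t ht ht'
      obtain ⟨s, hs, rfl⟩ := Finset.mem_image.1 ht'
      exact hknot ((Finset.mem_powersetCard.1 ht).1 (Finset.mem_insert_self k s))
    rw [Finset.sum_union hdisj]
    congr 1
    rw [Finset.sum_image]
    · rw [Finset.mul_sum]
      refine Finset.sum_congr rfl fun s hs => ?_
      have hks : k ∉ s := fun hmem => hknot ((Finset.mem_powersetCard.1 hs).1 hmem)
      rw [Finset.prod_insert hks]
    · intro s1 hs1 s2 hs2 heq
      have h1 : k ∉ s1 := fun hmem => hknot ((Finset.mem_powersetCard.1 hs1).1 hmem)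
      have h2 : k ∉ s2 := fun hmem => hknot ((Finset.mem_powersetCard.1 hs2).1 hmem)
      rw [← Finset.erase_insert h1, ← Finset.erase_insert h2, heq]

lemma Cc_le (n k : ℕ) : Cc n k ≤ k.factorial := by
  induction k generalizing n with
  | zero =>
    rcases Nat.eq_zero_or_pos n with rfl | h
    · rw [Cc_self]; simp
    · rw [Cc_of_lt h]; simp
  | succ k ih =>
    rcases n with _ | m
    · rw [Cc_zero]
      have : (1:ℝ) ≤ (k+1).factorial := by
        exact_mod_cast Nat.one_le_iff_ne_zero.2 (Nat.factorial_ne_zero _)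
      split
      · exact this
      · linarith
    · rw [Cc_rec]
      have h1 : Cc m k + k * Cc (m+1) k ≤ k.factorial + k * k.factorial :=
        add_le_add (ih m) (mul_le_mul_of_nonneg_left (ih (m+1)) (Nat.cast_nonneg k))
      have h2 : (k.factorial : ℝ) + k * k.factorial = ((k+1).factorial : ℝ) := by
        rw [Nat.factorial_succ]; push_cast; ring
      linarith

lemma Cc_succ_eq (n j : ℕ) :
    Cc (n+1) (j+1) = j.factorial * ∑ k ∈ Finset.range (j+1), Cc n k / k.factorial := by
  induction j with
  | zero => simp [Cc_rec n 0]
  | succ j ih =>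
    rw [Cc_rec, Finset.sum_range_succ, ih]
    have hj1 : (((j+1).factorial : ℕ) : ℝ) ≠ 0 := Nat.cast_ne_zero.2 (Nat.factorial_ne_zero _)
    have h1 : (((j+1).factorial : ℕ) : ℝ) = (j+1) * j.factorial := by
      rw [Nat.factorial_succ]; push_cast; ring
    rw [mul_add, mul_div_cancel₀ _ hj1, h1]
    push_cast
    ring





lemma Cc_term_nonneg (n k : ℕ) {u : ℝ} (h0 : 0 ≤ u) :
    0 ≤ Cc n k * u^k / k.factorial :=
  div_nonneg (mul_nonneg (Cc_nonneg n k) (pow_nonneg h0 k)) (Nat.cast_nonneg _)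

lemma Cc_term_le (n k : ℕ) {u : ℝ} (h0 : 0 ≤ u) :
    Cc n k * u^k / k.factorial ≤ u^k := by
  have hf : (0:ℝ) < k.factorial := by exact_mod_cast Nat.factorial_pos k
  rw [div_le_iff₀ hf]
  calc Cc n k * u^k ≤ (k.factorial : ℝ) * u^k :=
        mul_le_mul_of_nonneg_right (Cc_le n k) (pow_nonneg h0 k)
    _ = u^k * k.factorial := mul_comm _ _

lemma Cc_hasSum : ∀ (n : ℕ) {u : ℝ}, 0 ≤ u → u < 1 →
    HasSum (fun k => Cc n k * u^k / k.factorial)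
      ((-Real.log (1-u))^n / n.factorial) := by
  intro n
  induction n with
  | zero =>
    intro u h0 h1
    have he : (fun k => Cc 0 k * u^k / k.factorial)
        = (fun k : ℕ => if k = 0 then (1:ℝ) else 0) := by
      funext k
      rw [Cc_zero]
      split <;> simp_all
    rw [he]
    simpa using hasSum_ite_eq (0:ℕ) (1:ℝ)
  | succ n ih =>
    intro u h0 h1
    have hgeo : Summable (fun k : ℕ => u ^ k) := summable_geometric_of_lt_one h0 h1
    have hsum1 : Summable (fun k => Cc (n+1) k * u^k / k.factorial) :=
      Summable.of_nonneg_of_le (fun k => Cc_term_nonneg (n+1) k h0)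
        (fun k => Cc_term_le (n+1) k h0) hgeo
    set c : ℕ → ℝ := fun j => ∑ k ∈ Finset.range (j+1), Cc n k / k.factorial with hc
    have hcnn : ∀ j, 0 ≤ c j := fun j =>
      Finset.sum_nonneg fun k _ => div_nonneg (Cc_nonneg n k) (Nat.cast_nonneg _)
    have hcle : ∀ j, c j ≤ j + 1 := by
      intro j
      calc c j ≤ ∑ _k ∈ Finset.range (j+1), (1:ℝ) := by
            refine Finset.sum_le_sum fun k _ => ?_
            have hf : (0:ℝ) < k.factorial := by exact_mod_cast Nat.factorial_pos k
            rw [div_le_one hf]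
            exact Cc_le n k
        _ = j + 1 := by simp
    -- pointwise Cauchy product
    have hpoint : ∀ t : ℝ, 0 ≤ t → t < 1 →
        ∑' j, c j * t^j = (-Real.log (1-t))^n / n.factorial * (1-t)⁻¹ := by
      intro t ht0 ht1
      have hf : Summable (fun k => ‖Cc n k * t^k / k.factorial‖) := by
        refine Summable.of_nonneg_of_le (fun k => norm_nonneg _) (fun k => ?_)
          (summable_geometric_of_lt_one ht0 ht1)
        rw [Real.norm_of_nonneg (Cc_term_nonneg n k ht0)]
        exact Cc_term_le n k ht0
      have hgnorm : Summable (fun k : ℕ => ‖t^k‖) := by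
        have he : (fun k : ℕ => ‖t ^ k‖) = fun k : ℕ => t ^ k :=
          funext fun k => Real.norm_of_nonneg (pow_nonneg ht0 k)
        rw [he]
        exact summable_geometric_of_lt_one ht0 ht1
      have key := tsum_mul_tsum_eq_tsum_sum_range_of_summable_norm hf hgnorm
      rw [(ih ht0 ht1).tsum_eq, tsum_geometric_of_lt_one ht0 ht1] at key
      rw [key]
      refine tsum_congr fun j => ?_
      rw [hc]
      simp only []
      rw [Finset.sum_mul]
      refine Finset.sum_congr rfl fun k hk => ?_
      have hkj : k ≤ j := Nat.lt_succ_iff.1 (Finset.mem_range.1 hk)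
      have hpow : t^k * t^(j-k) = t^j := by
        rw [← pow_add, Nat.add_sub_cancel' hkj]
      rw [← hpow]; ring
    -- per-term integral over Ioc 0 u
    have hint_j : ∀ j : ℕ, ∫ t in Ioc (0:ℝ) u, c j * t^j = c j * (u^(j+1)/(j+1)) := by
      intro j
      rw [← intervalIntegral.integral_of_le h0, intervalIntegral.integral_const_mul,
        integral_pow]
      rw [zero_pow (Nat.succ_ne_zero j)]
      push_cast
      ring
    have hcontj : ∀ j : ℕ, Continuous (fun t : ℝ => c j * t^j) :=
      fun j => continuous_const.mul (continuous_pow j)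
    have hintgj : ∀ j : ℕ, IntegrableOn (fun t : ℝ => c j * t^j) (Ioc 0 u) :=
      fun j => (hcontj j).integrableOn_Ioc
    have hnorm : ∀ j : ℕ, (∫⁻ t in Ioc (0:ℝ) u, ‖c j * t^j‖₊)
        = ENNReal.ofReal (c j * (u^(j+1)/(j+1))) := by
      intro j
      simp only [← enorm_eq_nnnorm]; rw [← ofReal_integral_norm_eq_lintegral_enorm (hintgj j)]
      congr 1
      rw [← hint_j j]
      refine setIntegral_congr_fun measurableSet_Ioc fun t ht => ?_
      exact Real.norm_of_nonneg (mul_nonneg (hcnn j) (pow_nonneg ht.1.le _))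
    have hsummb : Summable (fun j : ℕ => c j * (u^(j+1)/(j+1))) := by
      have hg2 : Summable (fun j : ℕ => u * u ^ j) := hgeo.mul_left u
      refine Summable.of_nonneg_of_le
        (fun j => mul_nonneg (hcnn j) (div_nonneg (pow_nonneg h0 _) (by positivity)))
        (fun j => ?_) hg2
      have hj1 : (0:ℝ) < (j:ℝ) + 1 := by positivity
      calc c j * (u^(j+1)/(j+1)) ≤ ((j:ℝ)+1) * (u^(j+1)/(j+1)) :=
            mul_le_mul_of_nonneg_right (hcle j)
              (div_nonneg (pow_nonneg h0 _) hj1.le)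
        _ = u^(j+1) := by field_simp
        _ = u * u^j := by rw [pow_succ]; ring
    have hne : (∑' j : ℕ, ∫⁻ t in Ioc (0:ℝ) u, ‖c j * t^j‖₊) ≠ ⊤ := by
      rw [tsum_congr hnorm, ← ENNReal.ofReal_tsum_of_nonneg
        (fun j => mul_nonneg (hcnn j) (div_nonneg (pow_nonneg h0 _) (by positivity))) hsummb]
      exact ENNReal.ofReal_ne_top
    have hswap := MeasureTheory.integral_tsum
      (f := fun j : ℕ => fun t : ℝ => c j * t^j) (μ := volume.restrict (Ioc (0:ℝ) u))
      (fun j => (hcontj j).aestronglyMeasurable) hne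
    -- FTC
    have hFTC : ∫ t in Ioc (0:ℝ) u, (-Real.log (1-t))^n / n.factorial * (1-t)⁻¹
        = (-Real.log (1-u))^(n+1) / (n+1).factorial := by
      rw [← intervalIntegral.integral_of_le h0]
      have hderiv : ∀ t ∈ uIcc (0:ℝ) u,
          HasDerivAt (fun s => (-Real.log (1-s))^(n+1) / ((n+1).factorial : ℝ))
            ((-Real.log (1-t))^n / n.factorial * (1-t)⁻¹) t := by
        intro t ht
        rw [uIcc_of_le h0] at ht
        have h1t : (1:ℝ) - t ≠ 0 := by
          have := ht.2
          have : t < 1 := lt_of_le_of_lt ht.2 h1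
          linarith
        have hid : HasDerivAt (fun s : ℝ => 1 - s) (-1) t := by
          simpa using (hasDerivAt_id t).const_sub 1
        have h2 := (Real.hasDerivAt_log h1t).comp t hid
        have hL : HasDerivAt (fun s : ℝ => -Real.log (1-s)) ((1-t)⁻¹) t := by
          have h3 := h2.neg
          refine h3.congr_deriv ?_
          ring
        have h4 := (hL.pow (n+1)).div_const ((n+1).factorial : ℝ)
        refine h4.congr_deriv ?_
        have hfs : ((n+1).factorial : ℝ) = ((n:ℝ)+1) * n.factorial := by
          rw [Nat.factorial_succ]; push_cast; ring
        have hfn : ((n.factorial : ℕ) : ℝ) ≠ 0 := Nat.cast_ne_zero.2 (Nat.factorial_ne_zero _)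
        simp only [Nat.add_sub_cancel]
        rw [hfs]
        push_cast
        field_simp
      have hcont : ContinuousOn
          (fun t => (-Real.log (1-t))^n / (n.factorial : ℝ) * (1-t)⁻¹) (uIcc (0:ℝ) u) := by
        rw [uIcc_of_le h0]
        have hne' : ∀ t ∈ Icc (0:ℝ) u, (1:ℝ) - t ≠ 0 := by
          intro t ht
          have : t < 1 := lt_of_le_of_lt ht.2 h1
          linarith
        have hsub : ContinuousOn (fun t : ℝ => 1 - t) (Icc (0:ℝ) u) :=
          (continuous_const.sub continuous_id).continuousOn
        exact (((hsub.log hne').neg.pow n).div_const _).mul (hsub.inv₀ hne')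
      rw [intervalIntegral.integral_eq_sub_of_hasDerivAt hderiv hcont.intervalIntegrable]
      norm_num
    -- combine
    have htsum_c : ∑' j : ℕ, c j * (u^(j+1)/(j+1))
        = (-Real.log (1-u))^(n+1) / (n+1).factorial := by
      calc ∑' j : ℕ, c j * (u^(j+1)/(j+1))
          = ∑' j : ℕ, ∫ t in Ioc (0:ℝ) u, c j * t^j := tsum_congr fun j => (hint_j j).symm
        _ = ∫ t in Ioc (0:ℝ) u, ∑' j : ℕ, c j * t^j := hswap.symm
        _ = ∫ t in Ioc (0:ℝ) u, (-Real.log (1-t))^n / n.factorial * (1-t)⁻¹ := by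
            refine setIntegral_congr_fun measurableSet_Ioc fun t ht => ?_
            exact hpoint t ht.1.le (lt_of_le_of_lt ht.2 h1)
        _ = _ := hFTC
    have hshift : ∀ j : ℕ, Cc (n+1) (j+1) * u^(j+1) / ((j+1).factorial : ℝ)
        = c j * (u^(j+1)/(j+1)) := by
      intro j
      rw [Cc_succ_eq]
      simp only [hc]
      have h1' : (((j+1).factorial : ℕ) : ℝ) = ((j:ℝ)+1) * j.factorial := by
        rw [Nat.factorial_succ]; push_cast; ring
      have hfj : ((j.factorial : ℕ) : ℝ) ≠ 0 := Nat.cast_ne_zero.2 (Nat.factorial_ne_zero _)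
      have hj1 : ((j:ℝ)+1) ≠ 0 := by positivity
      rw [h1']
      field_simp
    have htsum : ∑' k : ℕ, Cc (n+1) k * u^k / k.factorial
        = (-Real.log (1-u))^(n+1) / (n+1).factorial := by
      rw [Summable.tsum_eq_zero_add hsum1]
      have h0' : Cc (n+1) 0 * u^0 / ((Nat.factorial 0 : ℕ) : ℝ) = 0 := by
        rw [Cc_of_lt (Nat.succ_pos n)]; simp
      rw [h0', zero_add]
      rw [tsum_congr hshift]
      exact htsum_c
    exact htsum ▸ hsum1.hasSum


lemma acoef_eq {n k : ℕ} (h : n ≤ k) : acoef n k = (-1:ℝ)^(k-n) * Cc n k := by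
  unfold acoef Cc
  rw [if_pos h]

end Prop2Aux

open Prop2Aux

/-- **Proposition 2.** For a nonnegative measurable `φ̃` on `(0,∞)` with
`∫₀^∞ ξ^{max(n,1)} φ̃(ξ) dξ < ∞`, the coefficients `𝔖_k = ∫₀^∞ φ̃(ξ)(-1+e^{-ξ})^k dξ`
are finite, the series `𝔈_n = ∑_{k ≥ max(n,2)} (a_n^{(k)}/k!) 𝔖_k` converges absolutely,
and `𝔈_1 = -∫₀^∞ φ̃(ξ)(e^{-ξ}-1+ξ) dξ` while `𝔈_n = (-1)^n (1/n!) ∫₀^∞ φ̃(ξ) ξ^n dξ`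
for `n ≥ 2`. -/
theorem stmt2 (n : ℕ) (hn : 1 ≤ n) (φt : ℝ → ℝ)
    (hmeas : Measurable φt) (hpos : ∀ ξ ∈ Ioi (0:ℝ), 0 ≤ φt ξ)
    (hint : IntegrableOn (fun ξ => ξ ^ (max n 1) * φt ξ) (Ioi (0:ℝ)))
    (S : ℕ → ℝ)
    (hS : ∀ k : ℕ, S k = ∫ ξ in Ioi (0:ℝ), φt ξ * (-1 + Real.exp (-ξ))^k)
    (g : ℕ → ℝ)
    (hg : ∀ k : ℕ, g k = if max n 2 ≤ k then acoef n k / (k.factorial : ℝ) * S k else 0) :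
    (∀ k : ℕ, max n 2 ≤ k →
        IntegrableOn (fun ξ => φt ξ * (-1 + Real.exp (-ξ))^k) (Ioi (0:ℝ))) ∧
    (Summable fun k => |g k|) ∧
    (∑' k : ℕ, g k) =
      (if n = 1 then -∫ ξ in Ioi (0:ℝ), φt ξ * (Real.exp (-ξ) - 1 + ξ)
       else (-1:ℝ)^n * (1 / (n.factorial : ℝ)) * ∫ ξ in Ioi (0:ℝ), φt ξ * ξ^n) := by
  set m := max n 2 with hm
  have hn1 : max n 1 = n := max_eq_left hn
  have hu0 : ∀ ξ : ℝ, 0 < ξ → 0 ≤ 1 - Real.exp (-ξ) := by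
    intro ξ hξ
    have : Real.exp (-ξ) ≤ Real.exp 0 := Real.exp_le_exp.2 (by linarith)
    rw [Real.exp_zero] at this
    linarith
  have hu1 : ∀ ξ : ℝ, 1 - Real.exp (-ξ) < 1 := by
    intro ξ
    have := Real.exp_pos (-ξ)
    linarith
  have huξ : ∀ ξ : ℝ, 0 < ξ → 1 - Real.exp (-ξ) ≤ ξ := by
    intro ξ hξ
    have := Real.add_one_le_exp (-ξ)
    linarith
  have hlogu : ∀ ξ : ℝ, -Real.log (1 - (1 - Real.exp (-ξ))) = ξ := by
    intro ξ
    rw [sub_sub_cancel, Real.log_exp, neg_neg]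
  -- HasSum of the main pointwise series
  have hbig : ∀ ξ : ℝ, 0 < ξ →
      HasSum (fun k => Cc n k * (1 - Real.exp (-ξ))^k / k.factorial * φt ξ)
        (ξ^n / n.factorial * φt ξ) := by
    intro ξ hξ
    have h := (Cc_hasSum n (hu0 ξ hξ) (hu1 ξ)).mul_right (φt ξ)
    rwa [hlogu ξ] at h
  -- integrability of the positive-version integrands
  have hintk : ∀ k : ℕ, n ≤ k →
      IntegrableOn (fun ξ => φt ξ * (1 - Real.exp (-ξ))^k) (Ioi (0:ℝ)) := by
    intro k hk
    have hmeasf : AEStronglyMeasurable (fun ξ => φt ξ * (1 - Real.exp (-ξ))^k)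
        (volume.restrict (Ioi (0:ℝ))) :=
      (hmeas.mul (((continuous_const.sub
        (Real.continuous_exp.comp continuous_neg)).pow k).measurable)).aestronglyMeasurable
    refine MeasureTheory.Integrable.mono hint hmeasf ?_
    rw [ae_restrict_iff' measurableSet_Ioi]
    refine ae_of_all _ fun ξ hξ => ?_
    rw [mem_Ioi] at hξ
    have h0 := hu0 ξ hξ
    have h1 := (hu1 ξ).le
    have hφ := hpos ξ (mem_Ioi.2 hξ)
    rw [Real.norm_eq_abs, Real.norm_eq_abs, abs_mul, abs_mul,
      abs_of_nonneg hφ, abs_of_nonneg (pow_nonneg h0 k),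
      abs_of_nonneg (pow_nonneg hξ.le _), hn1]
    calc φt ξ * (1 - Real.exp (-ξ))^k ≤ φt ξ * ξ^n := by
          refine mul_le_mul_of_nonneg_left ?_ hφ
          calc (1 - Real.exp (-ξ))^k ≤ (1 - Real.exp (-ξ))^n :=
                pow_le_pow_of_le_one h0 h1 hk
            _ ≤ ξ^n := pow_le_pow_left₀ h0 (huξ ξ hξ) n
      _ = ξ^n * φt ξ := mul_comm _ _
  -- T
  set T : ℕ → ℝ := fun k => ∫ ξ in Ioi (0:ℝ), φt ξ * (1 - Real.exp (-ξ))^k with hT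
  have hSk : ∀ k, S k = (-1:ℝ)^k * T k := by
    intro k
    rw [hS k, hT, ← integral_const_mul]
    refine setIntegral_congr_fun measurableSet_Ioi fun ξ _ => ?_
    have hx : (-1 + Real.exp (-ξ)) = -(1 - Real.exp (-ξ)) := by ring
    rw [hx, neg_pow]
    ring
  -- Part 1
  have part1 : ∀ k, m ≤ k →
      IntegrableOn (fun ξ => φt ξ * (-1 + Real.exp (-ξ))^k) (Ioi (0:ℝ)) := by
    intro k hk
    have hk' : n ≤ k := le_trans (le_max_left _ _) hk
    have he : (fun ξ => φt ξ * (-1 + Real.exp (-ξ))^k)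
        = fun ξ => (-1:ℝ)^k * (φt ξ * (1 - Real.exp (-ξ))^k) := by
      funext ξ
      have hx : (-1 + Real.exp (-ξ)) = -(1 - Real.exp (-ξ)) := by ring
      rw [hx, neg_pow]
      ring
    rw [he]
    exact (hintk k hk').const_mul _
  -- the auxiliary family
  set fF : ℕ → ℝ → ℝ := fun k ξ =>
    if m ≤ k then Cc n k / k.factorial * (φt ξ * (1 - Real.exp (-ξ))^k) else 0 with hfF
  have hfFint : ∀ k, IntegrableOn (fF k) (Ioi (0:ℝ)) := by
    intro k
    by_cases hk : m ≤ k
    · simp only [hfF, if_pos hk]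
      exact (hintk k (le_trans (le_max_left _ _) hk)).const_mul _
    · simp only [hfF, if_neg hk]
      exact integrable_zero _ _ _
  have hfFnn : ∀ k, ∀ ξ ∈ Ioi (0:ℝ), 0 ≤ fF k ξ := by
    intro k ξ hξ
    by_cases hk : m ≤ k
    · simp only [hfF, if_pos hk]
      exact mul_nonneg (div_nonneg (Cc_nonneg n k) (Nat.cast_nonneg _))
        (mul_nonneg (hpos ξ hξ) (pow_nonneg (hu0 ξ (mem_Ioi.1 hξ)) _))
    · simp [hfF, if_neg hk]
  have hfFval : ∀ k, (∫ ξ in Ioi (0:ℝ), fF k ξ)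
      = if m ≤ k then Cc n k / k.factorial * T k else 0 := by
    intro k
    by_cases hk : m ≤ k
    · simp only [hfF, if_pos hk]
      rw [integral_const_mul]
    · simp [hfF, if_neg hk]
  -- g in terms of fF integrals
  have hgeq : ∀ k, g k = (-1:ℝ)^n * ∫ ξ in Ioi (0:ℝ), fF k ξ := by
    intro k
    rw [hg k, hfFval k]
    by_cases hk : m ≤ k
    · rw [if_pos hk, if_pos hk, hSk k]
      have hk' : n ≤ k := le_trans (le_max_left _ _) hk
      rw [acoef_eq hk']
      have hsign : (-1:ℝ)^(k-n) * (-1:ℝ)^k = (-1:ℝ)^n := by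
        rw [← pow_add, show k - n + k = n + 2*(k-n) by omega, pow_add, pow_mul]
        norm_num
      calc (-1:ℝ)^(k-n) * Cc n k / k.factorial * ((-1)^k * T k)
          = ((-1:ℝ)^(k-n) * (-1:ℝ)^k) * (Cc n k / k.factorial * T k) := by ring
        _ = (-1:ℝ)^n * (Cc n k / k.factorial * T k) := by rw [hsign]
    · rw [if_neg hk, if_neg hk]
      ring
  -- summability of the integrals
  have hInn : ∀ k, 0 ≤ ∫ ξ in Ioi (0:ℝ), fF k ξ :=
    fun k => setIntegral_nonneg measurableSet_Ioi (hfFnn k)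
  have hbdd : ∀ N : ℕ, (∑ k ∈ Finset.range N, ∫ ξ in Ioi (0:ℝ), fF k ξ)
      ≤ ∫ ξ in Ioi (0:ℝ), ξ^(max n 1) * φt ξ := by
    intro N
    rw [← integral_finset_sum _ (fun k _ => hfFint k)]
    refine setIntegral_mono_on (integrable_finset_sum _ fun k _ => hfFint k) hint
      measurableSet_Ioi ?_
    intro ξ hξ
    have hξ' : (0:ℝ) < ξ := mem_Ioi.1 hξ
    have hb := hbig ξ hξ'
    have hφ := hpos ξ hξ
    have hterm_nn : ∀ k : ℕ, 0 ≤ Cc n k * (1 - Real.exp (-ξ))^k / k.factorial * φt ξ :=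
      fun k => mul_nonneg (Cc_term_nonneg n k (hu0 ξ hξ')) hφ
    calc (∑ k ∈ Finset.range N, fF k ξ)
        ≤ ∑ k ∈ Finset.range N, Cc n k * (1 - Real.exp (-ξ))^k / k.factorial * φt ξ := by
          refine Finset.sum_le_sum fun k _ => ?_
          by_cases hk : m ≤ k
          · simp only [hfF, if_pos hk]
            exact le_of_eq (by ring)
          · simp only [hfF, if_neg hk]
            exact hterm_nn k
      _ ≤ ξ^n / n.factorial * φt ξ := by
          rw [← hb.tsum_eq]
          exact Summable.sum_le_tsum _ (fun k _ => hterm_nn k) hb.summable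
      _ ≤ ξ^(max n 1) * φt ξ := by
          rw [hn1]
          refine mul_le_mul_of_nonneg_right ?_ hφ
          refine div_le_self (pow_nonneg hξ'.le n) ?_
          exact_mod_cast Nat.one_le_iff_ne_zero.2 (Nat.factorial_ne_zero n)
  have hIsumm : Summable (fun k => ∫ ξ in Ioi (0:ℝ), fF k ξ) :=
    summable_of_sum_range_le hInn hbdd
  -- summability of |g|
  have habs : ∀ k, |g k| = ∫ ξ in Ioi (0:ℝ), fF k ξ := by
    intro k
    rw [hgeq k, abs_mul, abs_pow, abs_neg, abs_one, one_pow, one_mul,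
      abs_of_nonneg (hInn k)]
  have part2 : Summable fun k => |g k| := hIsumm.congr fun k => (habs k).symm
  -- swap sum and integral
  have hlintnorm : ∀ k, (∫⁻ ξ in Ioi (0:ℝ), ‖fF k ξ‖₊)
      = ENNReal.ofReal (∫ ξ in Ioi (0:ℝ), fF k ξ) := by
    intro k
    simp only [← enorm_eq_nnnorm]; rw [← ofReal_integral_norm_eq_lintegral_enorm (hfFint k)]
    congr 1
    refine setIntegral_congr_fun measurableSet_Ioi fun ξ hξ => ?_
    exact Real.norm_of_nonneg (hfFnn k ξ hξ)
  have hne : (∑' k, ∫⁻ ξ in Ioi (0:ℝ), ‖fF k ξ‖₊) ≠ ⊤ := by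
    rw [tsum_congr hlintnorm, ← ENNReal.ofReal_tsum_of_nonneg hInn hIsumm]
    exact ENNReal.ofReal_ne_top
  have hswap := MeasureTheory.integral_tsum
    (fun k => (hfFint k).aestronglyMeasurable) hne
  -- pointwise tsum of fF
  have hptw : ∀ ξ ∈ Ioi (0:ℝ), (∑' k, fF k ξ) = ξ^n / n.factorial * φt ξ
      - ∑ k ∈ Finset.range m, Cc n k * (1 - Real.exp (-ξ))^k / k.factorial * φt ξ := by
    intro ξ hξ
    have hξ' : (0:ℝ) < ξ := mem_Ioi.1 hξ
    have hb := hbig ξ hξ'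
    have hsmall : HasSum
        (fun k => if m ≤ k then 0 else Cc n k * (1 - Real.exp (-ξ))^k / k.factorial * φt ξ)
        (∑ k ∈ Finset.range m, Cc n k * (1 - Real.exp (-ξ))^k / k.factorial * φt ξ) := by
      have h := hasSum_sum_of_ne_finset_zero (s := Finset.range m) (L := SummationFilter.unconditional ℕ)
        (f := fun k => if m ≤ k then 0
          else Cc n k * (1 - Real.exp (-ξ))^k / k.factorial * φt ξ)
        (fun k hk => if_pos (by simpa using hk))
      have hv : (∑ k ∈ Finset.range m, (if m ≤ k then 0
            else Cc n k * (1 - Real.exp (-ξ))^k / k.factorial * φt ξ))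
          = ∑ k ∈ Finset.range m, Cc n k * (1 - Real.exp (-ξ))^k / k.factorial * φt ξ :=
        Finset.sum_congr rfl fun k hk => if_neg (by simpa using Finset.mem_range.1 hk)
      rwa [hv] at h
    have hdiff := hb.sub hsmall
    have he : (fun k => Cc n k * (1 - Real.exp (-ξ))^k / k.factorial * φt ξ
        - (if m ≤ k then 0 else Cc n k * (1 - Real.exp (-ξ))^k / k.factorial * φt ξ))
        = fun k => fF k ξ := by
      funext k
      by_cases hk : m ≤ k
      · simp only [hfF, if_pos hk]
        ring
      · simp only [hfF, if_neg hk]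
        ring
    rw [he] at hdiff
    exact hdiff.tsum_eq
  -- final computation
  have hgsum : (∑' k, g k) = (-1:ℝ)^n * ∫ ξ in Ioi (0:ℝ), (∑' k, fF k ξ) := by
    rw [tsum_congr hgeq, tsum_mul_left, hswap]
  refine ⟨part1, part2, ?_⟩
  by_cases hcase : n = 1
  · subst hcase
    rw [if_pos rfl, hgsum]
    have hval : ∀ ξ ∈ Ioi (0:ℝ), (∑' k, fF k ξ) = φt ξ * (Real.exp (-ξ) - 1 + ξ) := by
      intro ξ hξ
      rw [hptw ξ hξ]
      have hm2 : m = 2 := rfl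
      rw [hm2]
      rw [Finset.sum_range_succ, Finset.sum_range_one,
        Cc_of_lt (by norm_num), Cc_self]
      simp only [pow_zero, pow_one, Nat.factorial_zero, Nat.factorial_one]
      push_cast
      ring
    rw [setIntegral_congr_fun measurableSet_Ioi hval]
    norm_num
  · have hn2 : 2 ≤ n := by omega
    have hmn : m = n := max_eq_left hn2
    rw [if_neg hcase, hgsum]
    have hval : ∀ ξ ∈ Ioi (0:ℝ), (∑' k, fF k ξ)
        = (1 / (n.factorial : ℝ)) * (φt ξ * ξ^n) := by
      intro ξ hξ
      rw [hptw ξ hξ, hmn]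
      have hz : (∑ k ∈ Finset.range n, Cc n k * (1 - Real.exp (-ξ))^k / k.factorial * φt ξ)
          = 0 :=
        Finset.sum_eq_zero fun k hk => by
          rw [Cc_of_lt (Finset.mem_range.1 hk)]
          ring
      rw [hz]
      ring
    rw [setIntegral_congr_fun measurableSet_Ioi hval, integral_const_mul]
    ring
end

section
/- Let β > 1 be real, k > 0, λ ∈ ℝ, and set 𝔯 := exp(iπ/(2β)). Then the integral 𝔯 ∫₀^∞ exp(−k t^{β} − i λ 𝔯 t) dt is absolutely convergent, the improper oscillatory integral ∫₀^∞ exp(i k t^{β} − i λ t) dt := lim_{R→∞} ∫₀^{R} exp(i k t^{β} − i λ t) dt exists, and the two are equal: 𝔯 ∫₀^∞ exp(−k t^{β} − i λ 𝔯 t) dt = ∫₀^∞ exp(i k t^{β} − i λ t) dt. -/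
open MeasureTheory Real Complex Filter Set

section stmt12aux

/-- The function on the closed sector, in logarithmic coordinates. -/
noncomputable def GG (β k l : ℝ) : ℂ → ℂ := fun w =>
  Complex.exp (Complex.I * k * Complex.exp (β * w) - Complex.I * l * Complex.exp w)
    * Complex.exp w

/-- The oscillatory integrand. -/
noncomputable def ff0 (β k l : ℝ) : ℝ → ℂ := fun t =>
  Complex.exp (Complex.I * k * ((t ^ β : ℝ) : ℂ) - Complex.I * l * t)

/-- The rotated (absolutely convergent) integrand. -/
noncomputable def ff1 (β k l : ℝ) (r : ℂ) : ℝ → ℂ := fun t =>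
  Complex.exp (-((k * t ^ β : ℝ) : ℂ) - Complex.I * l * r * t)

lemma ff0_cont {β k l : ℝ} (hβ : 1 < β) : Continuous (ff0 β k l) := by
  unfold ff0
  have h : Continuous fun t : ℝ => t ^ β := Real.continuous_rpow_const (by linarith)
  fun_prop

lemma ff1_cont {β k l : ℝ} {r : ℂ} (hβ : 1 < β) : Continuous (ff1 β k l r) := by
  unfold ff1
  have h : Continuous fun t : ℝ => t ^ β := Real.continuous_rpow_const (by linarith)
  fun_prop

lemma GG_diff (β k l : ℝ) : Differentiable ℂ (GG β k l) := by
  unfold GG; fun_prop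

lemma GG_bottom {β k l : ℝ} (x : ℝ) :
    GG β k l x = Real.exp x • ff0 β k l (Real.exp x) := by
  have h1 : (Real.exp x) ^ β = Real.exp (β * x) := by
    rw [Real.rpow_def_of_pos (Real.exp_pos x), Real.log_exp]; ring_nf
  rw [GG, ff0, h1]
  push_cast [← Complex.ofReal_exp]
  rw [Complex.ofReal_exp]
  push_cast
  rw [real_smul]
  push_cast [← Complex.ofReal_exp]
  ring_nf

lemma GG_top {β k l : ℝ} {r : ℂ} (hβ : 1 < β)
    (hr : r = Complex.exp (Complex.I * Real.pi / (2*β))) (x : ℝ) :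
    GG β k l (x + ((Real.pi/(2*β) : ℝ) : ℂ) * Complex.I)
      = Real.exp x • (r * ff1 β k l r (Real.exp x)) := by
  have hβ0 : (β:ℂ) ≠ 0 := by norm_cast; positivity
  have h1 : (β:ℂ) * ((x:ℂ) + ((Real.pi/(2*β) : ℝ) : ℂ) * Complex.I)
      = (β*x : ℝ) + ((Real.pi/2 : ℝ):ℂ) * Complex.I := by
    have hβ0' : β ≠ 0 := by positivity
    push_cast; field_simp
  have h2 : Complex.exp (((Real.pi/2 : ℝ):ℂ) * Complex.I) = Complex.I := by
    push_cast
    simp [Complex.exp_mul_I]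
  have h3 : (Real.exp x) ^ β = Real.exp (β * x) := by
    rw [Real.rpow_def_of_pos (Real.exp_pos x), Real.log_exp]; ring_nf
  have h4 : Complex.exp ((x:ℂ) + ((Real.pi/(2*β) : ℝ):ℂ) * Complex.I) = (Real.exp x : ℂ) * r := by
    rw [hr, Complex.exp_add, ← Complex.ofReal_exp]
    push_cast
    ring_nf
  rw [GG, ff1, h1, Complex.exp_add, h2, ← Complex.ofReal_exp, h4, h3, real_smul]
  rw [show Complex.I * (k:ℂ) * ((Real.exp (β*x) : ℝ) * Complex.I) - Complex.I * l * ((Real.exp x :ℝ) * r)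
      = -((k * Real.exp (β*x) : ℝ) : ℂ) - Complex.I * l * r * (Real.exp x : ℝ) by
        push_cast; ring_nf; rw [Complex.I_sq]; ring]
  ring

lemma GG_norm (β k l : ℝ) (x y : ℝ) :
    ‖GG β k l (x + y * Complex.I)‖ = Real.exp x *
      Real.exp (-(k * Real.exp (β*x) * Real.sin (β*y)) + l * Real.exp x * Real.sin y) := by
  have h1 : (Complex.I * k * Complex.exp (β * ((x:ℂ)+y*Complex.I))
      - Complex.I * l * Complex.exp ((x:ℂ)+y*Complex.I)).re
      = -(k * Real.exp (β*x) * Real.sin (β*y)) + l * Real.exp x * Real.sin y := by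
    rw [show (β:ℂ) * ((x:ℂ) + y*Complex.I) = ((β*x:ℝ):ℂ) + ((β*y:ℝ):ℂ)*Complex.I by
      push_cast; ring]
    simp [Complex.exp_re, Complex.exp_im, Complex.mul_re, Complex.mul_im]
    ring
  have h2 : ((x:ℂ)+y*Complex.I).re = x := by simp
  rw [GG]
  simp only [norm_mul, Complex.norm_exp, h1, h2]
  ring

lemma contour {β k l : ℝ} {r : ℂ} (hβ : 1 < β)
    (hr : r = Complex.exp (Complex.I * Real.pi / (2*β)))
    {ε R : ℝ} (hε : 0 < ε) (hεR : ε ≤ R) :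
    (∫ t in ε..R, ff0 β k l t) - r * (∫ t in ε..R, ff1 β k l r t)
      + Complex.I • (∫ y in (0:ℝ)..(Real.pi/(2*β)), GG β k l (Real.log R + y * Complex.I))
      - Complex.I • (∫ y in (0:ℝ)..(Real.pi/(2*β)), GG β k l (Real.log ε + y * Complex.I)) = 0 := by
  have hθ : (0:ℝ) < Real.pi/(2*β) := by positivity
  have key := Complex.integral_boundary_rect_eq_zero_of_differentiableOn (GG β k l)
    (Real.log ε) ((Real.log R : ℂ) + ((Real.pi/(2*β) : ℝ) : ℂ) * Complex.I)
    ((GG_diff β k l).differentiableOn)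
  simp only [Complex.ofReal_re, Complex.ofReal_im, Complex.add_re, Complex.add_im,
    Complex.mul_re, Complex.mul_im, Complex.I_re, Complex.I_im] at key
  norm_num at key
  have hsub : ∀ g : ℝ → ℂ, Continuous g →
      (∫ x in Real.log ε..Real.log R, Real.exp x • g (Real.exp x)) = ∫ t in ε..R, g t := by
    intro g hg
    have := intervalIntegral.integral_comp_smul_deriv
      (a := Real.log ε) (b := Real.log R) (f := Real.exp) (f' := Real.exp)
      (fun x _ => Real.hasDerivAt_exp x) Real.continuous_exp.continuousOn hg
    rw [Real.exp_log hε, Real.exp_log (lt_of_lt_of_le hε hεR)] at this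
    simpa [Function.comp] using this
  have hbot : (∫ x in Real.log ε..Real.log R, GG β k l x) = ∫ t in ε..R, ff0 β k l t := by
    rw [← hsub (ff0 β k l) (ff0_cont hβ)]
    exact intervalIntegral.integral_congr fun x _ => GG_bottom x
  have htop : (∫ x in Real.log ε..Real.log R, GG β k l (x + ((Real.pi/(2*β) : ℝ):ℂ) * Complex.I))
      = r * ∫ t in ε..R, ff1 β k l r t := by
    rw [← intervalIntegral.integral_const_mul,
      ← hsub (fun t => r * ff1 β k l r t) ((continuous_const).mul (ff1_cont hβ))]
    exact intervalIntegral.integral_congr fun x _ => GG_top hβ hr x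
  rw [show ((Real.pi/(2*β) : ℝ):ℂ) = (Real.pi:ℂ)/(2*(β:ℂ)) by push_cast; ring] at htop
  rw [hbot, htop] at key
  simpa only [smul_eq_mul] using key

lemma exp_int_bound {m θ : ℝ} (hm : 0 < m) (hθ : 0 ≤ θ) :
    ∫ y in (0:ℝ)..θ, Real.exp (-(m*y)) ≤ 1/m := by
  have : ∀ y ∈ uIcc (0:ℝ) θ, HasDerivAt (fun y => -Real.exp (-(m*y)) / m) (Real.exp (-(m*y))) y := by
    intro y _
    have h1 : HasDerivAt (fun y : ℝ => -(m*y)) (-m) y := by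
      simpa using ((hasDerivAt_id y).const_mul (-m))
    have h2 := (Real.hasDerivAt_exp (-(m*y))).comp y h1
    have h3 := (h2.neg).div_const m
    refine h3.congr_deriv ?_
    field_simp [hm.ne']
  rw [intervalIntegral.integral_eq_sub_of_hasDerivAt this
    ((Real.continuous_exp.comp (by fun_prop)).intervalIntegrable _ _)]
  have h4 : 0 < Real.exp (-(m*θ)) := Real.exp_pos _
  have : -Real.exp (-(m * θ)) / m - -Real.exp (-(m * 0)) / m
      = (1 - Real.exp (-(m*θ)))/m := by
    rw [mul_zero, neg_zero, Real.exp_zero]; ring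
  rw [this]
  rw [div_le_div_iff₀ hm hm]
  nlinarith

lemma arc_bound {β k l : ℝ} (hβ : 1 < β) (hk : 0 < k) {R : ℝ} (hR : 1 ≤ R)
    (hd : 1 ≤ 2*β/Real.pi * k * R^(β-1) - |l|) :
    ‖∫ y in (0:ℝ)..(Real.pi/(2*β)), GG β k l (Real.log R + y * Complex.I)‖
      ≤ (2*β/Real.pi * k * R^(β-1) - |l|)⁻¹ := by
  set d := 2*β/Real.pi * k * R^(β-1) - |l| with hd_def
  set θ := Real.pi/(2*β) with hθ_def
  have hβ0 : (0:ℝ) < β := by linarith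
  have hR0 : (0:ℝ) < R := by linarith
  have hd0 : (0:ℝ) < d := by linarith
  have hm0 : (0:ℝ) < R * d := by positivity
  have hθ0 : (0:ℝ) < θ := by rw [hθ_def]; positivity
  have hRb : Real.exp (β * Real.log R) = R ^ β := by
    rw [Real.rpow_def_of_pos hR0]; ring_nf
  have hRb' : R ^ β = R ^ (β-1) * R := by
    nth_rewrite 1 [show β = β-1+1 by ring]
    rw [Real.rpow_add_one hR0.ne']
  have hpt : ∀ y ∈ Set.uIoc (0:ℝ) θ, ‖GG β k l (Real.log R + y * Complex.I)‖
      ≤ R * Real.exp (-((R*d)*y)) := by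
    intro y hy
    rw [uIoc_of_le hθ0.le] at hy
    obtain ⟨hy0, hyθ⟩ := hy
    have hyθ' : β * y ≤ Real.pi/2 := by
      rw [hθ_def] at hyθ
      calc β * y ≤ β * (Real.pi/(2*β)) := by nlinarith
      _ = Real.pi/2 := by field_simp
    have hsin1 : 2/Real.pi * (β*y) ≤ Real.sin (β*y) := Real.mul_le_sin (by positivity) hyθ'
    have hsin2 : Real.sin y ≤ y := Real.sin_le hy0.le
    have hsin3 : 0 ≤ Real.sin y := Real.sin_nonneg_of_nonneg_of_le_pi hy0.le
      (by nlinarith [Real.pi_pos])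
    rw [GG_norm, Real.exp_log hR0, hRb]
    have hexp : -(k * R^β * Real.sin (β*y)) + l * R * Real.sin y ≤ -((R*d)*y) := by
      have h1 : k * R^β * (2/Real.pi * (β*y)) ≤ k * R^β * Real.sin (β*y) := by
        apply mul_le_mul_of_nonneg_left hsin1 (by positivity)
      have h2 : l * R * Real.sin y ≤ |l| * R * y := by
        calc l * R * Real.sin y ≤ |l| * R * Real.sin y := by
              apply mul_le_mul_of_nonneg_right _ hsin3
              apply mul_le_mul_of_nonneg_right (le_abs_self l) hR0.le
        _ ≤ |l| * R * y := by
              apply mul_le_mul_of_nonneg_left hsin2 (by positivity)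
      have h3 : k * R^β * (2/Real.pi * (β*y)) = 2*β/Real.pi * k * R^β * y := by
        field_simp
      rw [hd_def]
      have h4 : 2*β/Real.pi * k * R^β = (2*β/Real.pi * k * R^(β-1)) * R := by
        rw [hRb']; ring
      nlinarith
    exact mul_le_mul_of_nonneg_left (Real.exp_le_exp.mpr hexp) hR0.le
  have hint : IntervalIntegrable (fun y => R * Real.exp (-((R*d)*y))) volume 0 θ :=
    (continuous_const.mul (Real.continuous_exp.comp (by fun_prop))).intervalIntegrable _ _
  calc ‖∫ y in (0:ℝ)..θ, GG β k l (Real.log R + y * Complex.I)‖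
      ≤ |∫ y in (0:ℝ)..θ, R * Real.exp (-((R*d)*y))| :=
        intervalIntegral.norm_integral_le_abs_of_norm_le
          ((ae_restrict_iff' measurableSet_uIoc).mpr (ae_of_all _ hpt)) hint
    _ = ∫ y in (0:ℝ)..θ, R * Real.exp (-((R*d)*y)) := by
        apply _root_.abs_of_nonneg
        apply intervalIntegral.integral_nonneg hθ0.le
        intro y _; positivity
    _ = R * ∫ y in (0:ℝ)..θ, Real.exp (-((R*d)*y)) := intervalIntegral.integral_const_mul _ _
    _ ≤ R * (1/(R*d)) := by
        apply mul_le_mul_of_nonneg_left (exp_int_bound hm0 hθ0.le) hR0.le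
    _ = d⁻¹ := by field_simp

lemma ff1_norm {β k l : ℝ} {r : ℂ}
    (hr : r = Complex.exp (Complex.I * Real.pi / (2*β))) (hβ : 1 < β) (t : ℝ) :
    ‖ff1 β k l r t‖ = Real.exp (-(k * t^β) + l * Real.sin (Real.pi/(2*β)) * t) := by
  have hβ0 : (β:ℂ) ≠ 0 := by norm_cast; positivity
  have hr' : r = ((Real.cos (Real.pi/(2*β)) : ℝ):ℂ) + ((Real.sin (Real.pi/(2*β)) : ℝ):ℂ) * Complex.I := by
    rw [hr, show Complex.I * Real.pi / (2*(β:ℂ)) = ((Real.pi/(2*β) : ℝ):ℂ) * Complex.I by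
      push_cast; field_simp, Complex.exp_mul_I, Complex.ofReal_cos, Complex.ofReal_sin]
  have key : -((k * t^β : ℝ):ℂ) - Complex.I*l*r*t
      = ((-(k*t^β) + l * Real.sin (Real.pi/(2*β)) * t : ℝ):ℂ)
        + ((-(l * Real.cos (Real.pi/(2*β)) * t) : ℝ):ℂ)*Complex.I := by
    rw [hr']; push_cast; ring_nf; rw [Complex.I_sq]; ring
  rw [ff1, key, Complex.norm_exp]
  congr 1
  rw [Complex.add_re, Complex.mul_re, Complex.I_re, Complex.I_im, Complex.ofReal_re,
    Complex.ofReal_im]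
  ring

lemma ff1_integrable {β k l : ℝ} {r : ℂ} (hβ : 1 < β) (hk : 0 < k)
    (hr : r = Complex.exp (Complex.I * Real.pi / (2*β))) :
    IntegrableOn (ff1 β k l r) (Ioi (0:ℝ)) := by
  have hβ0 : (0:ℝ) < β - 1 := by linarith
  have htd : Tendsto (fun t : ℝ => k * t^(β-1)) atTop atTop :=
    (tendsto_rpow_atTop hβ0).const_mul_atTop hk
  obtain ⟨T₀, hT₀⟩ := (htd.eventually_ge_atTop (|l| + 1)).exists_forall_of_atTop
  set T := max T₀ 1 with hT_def
  have hT1 : (1:ℝ) ≤ T := le_max_right _ _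
  have hT0 : (0:ℝ) ≤ T := by linarith
  have hbound : ∀ t ∈ Ioi T, ‖ff1 β k l r t‖ ≤ Real.exp (-(1*t)) := by
    intro t ht
    have htT : T < t := ht
    have ht0 : (0:ℝ) < t := lt_of_le_of_lt (by linarith) htT
    have ht1 : (1:ℝ) ≤ t := by linarith
    have hkt : |l| + 1 ≤ k * t^(β-1) := hT₀ t (le_of_lt (lt_of_le_of_lt (le_max_left _ _) htT))
    have htβ : t ^ β = t^(β-1) * t := by
      nth_rewrite 1 [show β = β-1+1 by ring]
      rw [Real.rpow_add_one ht0.ne']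
    rw [ff1_norm hr hβ]
    apply Real.exp_le_exp.mpr
    have hs : l * Real.sin (Real.pi/(2*β)) * t ≤ |l| * t := by
      have h1 : l * Real.sin (Real.pi/(2*β)) ≤ |l| := by
        calc l * Real.sin (Real.pi/(2*β)) ≤ |l * Real.sin (Real.pi/(2*β))| := le_abs_self _
        _ = |l| * |Real.sin (Real.pi/(2*β))| := abs_mul _ _
        _ ≤ |l| * 1 := by
            apply mul_le_mul_of_nonneg_left
              (abs_le.mpr ⟨Real.neg_one_le_sin _, Real.sin_le_one _⟩) (abs_nonneg _)
        _ = |l| := mul_one _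
      exact mul_le_mul_of_nonneg_right h1 ht0.le
    have hkβ : (|l| + 1) * t ≤ k * t^β := by
      rw [htβ, ← mul_assoc]
      exact mul_le_mul_of_nonneg_right hkt ht0.le
    linarith [abs_nonneg l]
  have h1 : IntegrableOn (ff1 β k l r) (Ioi T) := by
    apply Integrable.mono' (exp_neg_integrableOn_Ioi T one_pos)
      ((ff1_cont hβ).aestronglyMeasurable.restrict)
    exact (ae_restrict_iff' measurableSet_Ioi).mpr (ae_of_all _ (by
      intro t ht
      simpa [neg_mul] using hbound t ht))
  have h2 : IntegrableOn (ff1 β k l r) (Ioc 0 T) :=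
    ((ff1_cont hβ).continuousOn.integrableOn_Icc).mono_set Ioc_subset_Icc_self
  have := h2.union h1
  rwa [Ioc_union_Ioi_eq_Ioi hT0] at this

-- the contour identity with the small arc removed, for each fixed R ≥ 1
lemma contour_limit {β k l : ℝ} {r : ℂ} (hβ : 1 < β) (hk : 0 < k)
    (hr : r = Complex.exp (Complex.I * Real.pi / (2*β)))
    {R : ℝ} (hR : 1 ≤ R) :
    (∫ t in (0:ℝ)..R, ff0 β k l t) = r * (∫ t in (0:ℝ)..R, ff1 β k l r t)
      - Complex.I • (∫ y in (0:ℝ)..(Real.pi/(2*β)), GG β k l (Real.log R + y * Complex.I)) := by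
  set θ := Real.pi/(2*β) with hθ_def
  have hβ0 : (0:ℝ) < β := by linarith
  have hθ0 : (0:ℝ) < θ := by rw [hθ_def]; positivity
  have hR0 : (0:ℝ) < R := by linarith
  -- limits of the three ε-dependent pieces as ε → 0⁺
  have T1 : Tendsto (fun ε => ∫ t in ε..R, ff0 β k l t) (nhdsWithin 0 (Ioi 0))
      (nhds (∫ t in (0:ℝ)..R, ff0 β k l t)) := by
    have cp := intervalIntegral.continuous_primitive (μ := volume) (f := ff0 β k l)
      (fun a b => ((ff0_cont hβ)).intervalIntegrable a b) R
    have := (cp.tendsto 0).neg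
    rw [← intervalIntegral.integral_symm] at this
    exact (this.congr (fun ε => (intervalIntegral.integral_symm _ _).symm)).mono_left
      nhdsWithin_le_nhds
  have T2 : Tendsto (fun ε => ∫ t in ε..R, ff1 β k l r t) (nhdsWithin 0 (Ioi 0))
      (nhds (∫ t in (0:ℝ)..R, ff1 β k l r t)) := by
    have cp := intervalIntegral.continuous_primitive (μ := volume) (f := ff1 β k l r)
      (fun a b => ((ff1_cont hβ)).intervalIntegrable a b) R
    have := (cp.tendsto 0).neg
    rw [← intervalIntegral.integral_symm] at this
    exact (this.congr (fun ε => (intervalIntegral.integral_symm _ _).symm)).mono_left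
      nhdsWithin_le_nhds
  have T3 : Tendsto (fun ε => ∫ y in (0:ℝ)..θ, GG β k l (Real.log ε + y * Complex.I))
      (nhdsWithin 0 (Ioi 0)) (nhds 0) := by
    apply squeeze_zero_norm'
      (a := fun ε => (ε * Real.exp |l|) * |θ - 0|)
    · filter_upwards [Ioc_mem_nhdsGT_of_mem (show (0:ℝ) ∈ Ico 0 1 by norm_num)] with ε hε
      obtain ⟨hε0, hε1⟩ := hε
      apply intervalIntegral.norm_integral_le_of_norm_le_const
      intro y hy
      rw [uIoc_of_le hθ0.le] at hy
      obtain ⟨hy0, hyθ⟩ := hy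
      have hyπ : y ≤ Real.pi/2 := by
        rw [hθ_def] at hyθ
        calc y ≤ Real.pi/(2*β) := hyθ
        _ ≤ Real.pi/2 := by
            apply div_le_div_of_nonneg_left Real.pi_pos.le two_pos
            linarith
      have hsinβ : 0 ≤ Real.sin (β*y) := by
        apply Real.sin_nonneg_of_nonneg_of_le_pi (by positivity)
        rw [hθ_def] at hyθ
        have : β * y ≤ Real.pi/2 := by
          calc β * y ≤ β * (Real.pi/(2*β)) := by nlinarith
          _ = Real.pi/2 := by field_simp
        linarith [Real.pi_pos]
      rw [GG_norm, Real.exp_log hε0]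
      have hexp : -(k * Real.exp (β * Real.log ε) * Real.sin (β*y)) + l * ε * Real.sin y ≤ |l| := by
        have h1 : 0 ≤ k * Real.exp (β * Real.log ε) * Real.sin (β*y) := by positivity
        have h2 : l * ε * Real.sin y ≤ |l| := by
          calc l * ε * Real.sin y ≤ |l * ε * Real.sin y| := le_abs_self _
          _ = |l| * |ε| * |Real.sin y| := by rw [abs_mul, abs_mul]
          _ ≤ |l| * 1 * 1 := by
              apply mul_le_mul
              apply mul_le_mul_of_nonneg_left _ (abs_nonneg _)
              · rw [abs_of_pos hε0]; exact hε1
              · exact abs_le.mpr ⟨Real.neg_one_le_sin _, Real.sin_le_one _⟩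
              · exact abs_nonneg _
              · positivity
          _ = |l| := by ring
        linarith
      exact mul_le_mul_of_nonneg_left (Real.exp_le_exp.mpr hexp) hε0.le
    · have : Tendsto (fun ε : ℝ => (ε * Real.exp |l|) * |θ - 0|) (nhds 0) (nhds 0) := by
        have hc : Continuous fun ε : ℝ => (ε * Real.exp |l|) * |θ - 0| := by fun_prop
        have := hc.tendsto 0
        simpa using this
      exact this.mono_left nhdsWithin_le_nhds
  -- the ε-identity
  have hev : ∀ᶠ ε in nhdsWithin (0:ℝ) (Ioi 0),
      (∫ t in ε..R, ff0 β k l t) - r * (∫ t in ε..R, ff1 β k l r t)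
        + Complex.I • (∫ y in (0:ℝ)..θ, GG β k l (Real.log R + y * Complex.I))
        - Complex.I • (∫ y in (0:ℝ)..θ, GG β k l (Real.log ε + y * Complex.I)) = 0 := by
    filter_upwards [Ioc_mem_nhdsGT_of_mem (show (0:ℝ) ∈ Ico 0 R from ⟨le_refl 0, hR0⟩)]
      with ε hε
    exact contour hβ hr hε.1 hε.2
  have Tall : Tendsto (fun ε =>
      (∫ t in ε..R, ff0 β k l t) - r * (∫ t in ε..R, ff1 β k l r t)
        + Complex.I • (∫ y in (0:ℝ)..θ, GG β k l (Real.log R + y * Complex.I))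
        - Complex.I • (∫ y in (0:ℝ)..θ, GG β k l (Real.log ε + y * Complex.I)))
      (nhdsWithin 0 (Ioi 0))
      (nhds ((∫ t in (0:ℝ)..R, ff0 β k l t) - r * (∫ t in (0:ℝ)..R, ff1 β k l r t)
        + Complex.I • (∫ y in (0:ℝ)..θ, GG β k l (Real.log R + y * Complex.I)) - Complex.I • 0)) := by
    exact (((T1.sub (T2.const_mul r)).add tendsto_const_nhds).sub (T3.const_smul Complex.I))
  have heq := tendsto_nhds_unique (Tall.congr' hev) tendsto_const_nhds
  rw [smul_zero, sub_zero, smul_eq_mul] at heq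
  rw [smul_eq_mul]
  linear_combination heq

end stmt12aux

/-- **Contour rotation for the kernel (5)–(6).** For `β > 1`, `k > 0`, `λ ∈ ℝ` and
`𝔯 = e^{iπ/(2β)}`, the integral `𝔯 ∫₀^∞ e^{-kt^β - iλ𝔯t} dt` converges absolutely, the
improper oscillatory integral `∫₀^∞ e^{ikt^β - iλt} dt = lim_{R→∞} ∫₀^R e^{ikt^β - iλt} dt`
exists, and the two coincide. -/
theorem stmt12 (β k l : ℝ) (hβ : 1 < β) (hk : 0 < k)
    (r : ℂ) (hr : r = Complex.exp (Complex.I * Real.pi / (2*β))) :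
    IntegrableOn
      (fun t : ℝ => Complex.exp (-((k * t ^ β : ℝ) : ℂ) - Complex.I * l * r * t))
      (Ioi (0:ℝ)) ∧
    Tendsto
      (fun R : ℝ => ∫ t in (0:ℝ)..R,
        Complex.exp (Complex.I * k * ((t ^ β : ℝ) : ℂ) - Complex.I * l * t))
      atTop
      (nhds (r * ∫ t in Ioi (0:ℝ),
        Complex.exp (-((k * t ^ β : ℝ) : ℂ) - Complex.I * l * r * t))) := by
  have hβ1 : (0:ℝ) < β - 1 := by linarith
  have hc : (0:ℝ) < 2*β/Real.pi * k := by
    have := Real.pi_pos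
    positivity
  have hint := ff1_integrable (β := β) (k := k) (l := l) hβ hk hr
  refine ⟨hint, ?_⟩
  -- the big-arc contribution tends to zero
  have htd : Tendsto (fun R : ℝ => 2*β/Real.pi * k * R^(β-1) - |l|) atTop atTop := by
    have h1 : Tendsto (fun R : ℝ => 2*β/Real.pi * k * R^(β-1)) atTop atTop :=
      (tendsto_rpow_atTop hβ1).const_mul_atTop hc
    simpa [sub_eq_add_neg] using tendsto_atTop_add_const_right atTop (-|l|) h1
  have hArc : Tendsto
      (fun R : ℝ => ∫ y in (0:ℝ)..(Real.pi/(2*β)), GG β k l (Real.log R + y * Complex.I))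
      atTop (nhds 0) := by
    apply squeeze_zero_norm' (a := fun R : ℝ => (2*β/Real.pi * k * R^(β-1) - |l|)⁻¹)
    · filter_upwards [eventually_ge_atTop (1:ℝ), htd.eventually_ge_atTop 1] with R h1 h2
      exact arc_bound hβ hk h1 h2
    · exact htd.inv_tendsto_atTop
  have hI : Tendsto (fun R : ℝ => r * ∫ t in (0:ℝ)..R, ff1 β k l r t) atTop
      (nhds (r * ∫ t in Ioi (0:ℝ), ff1 β k l r t)) :=
    (MeasureTheory.intervalIntegral_tendsto_integral_Ioi 0 hint tendsto_id).const_mul r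
  have hev : (fun R : ℝ => r * (∫ t in (0:ℝ)..R, ff1 β k l r t)
        - Complex.I • (∫ y in (0:ℝ)..(Real.pi/(2*β)), GG β k l (Real.log R + y * Complex.I)))
      =ᶠ[atTop] fun R : ℝ => ∫ t in (0:ℝ)..R, ff0 β k l t := by
    filter_upwards [eventually_ge_atTop (1:ℝ)] with R hR
    exact (contour_limit hβ hk hr hR).symm
  have h := (hI.sub (hArc.const_smul Complex.I)).congr' hev
  rw [smul_zero, sub_zero] at h
  exact h
end

section
/- Let φ̃ : (0,∞) → ℝ be a measurable function with ∫₀^∞ ξ² |φ̃(ξ)| dξ < ∞, and define its second right-sided integral (I²_{−}φ̃)(ξ) := ∫_ξ^∞ (u − ξ) φ̃(u) du for ξ > 0. Then for every k ∈ ℝ, both of the following integrals are absolutely convergent and equal: ∫₀^∞ φ̃(ξ) [(−1 + e^{−ξ})(ik) + e^{ikξ} − 1] dξ = ∫₀^∞ (I²_{−}φ̃)(ξ) [ik e^{−ξ} − k² e^{ikξ}] dξ. -/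
open MeasureTheory Real Complex Set

noncomputable def gk (k u : ℝ) : ℂ :=
  Complex.I * k * Complex.exp (-(u:ℂ)) - (k:ℂ)^2 * Complex.exp (Complex.I * k * u)

noncomputable def GkC (k ξ : ℝ) : ℂ :=
  (-1 + Complex.exp (-(ξ:ℂ))) * (Complex.I * k) + Complex.exp (Complex.I * k * ξ) - 1

noncomputable def Gk' (k u : ℝ) : ℂ :=
  -(Complex.I * k) * Complex.exp (-(u:ℂ)) + Complex.I * k * Complex.exp (Complex.I * k * u)

lemma hasDerivAt_coe (u : ℝ) : HasDerivAt (fun x : ℝ => (x:ℂ)) 1 u := by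
  exact Complex.ofRealCLM.hasDerivAt (x := u)

lemma continuous_gk (k : ℝ) : Continuous (gk k) := by
  unfold gk; fun_prop

lemma hasDerivAt_exp_neg (u : ℝ) :
    HasDerivAt (fun x : ℝ => Complex.exp (-(x:ℂ))) (-Complex.exp (-(u:ℂ))) u := by
  simpa using ((hasDerivAt_coe u).neg).cexp

lemma hasDerivAt_exp_Ik (k : ℝ) (u : ℝ) :
    HasDerivAt (fun x : ℝ => Complex.exp (Complex.I * k * x))
      (Complex.I * k * Complex.exp (Complex.I * k * u)) u := by
  have := ((hasDerivAt_coe u).const_mul (Complex.I * k)).cexp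
  simpa [mul_comm] using this

lemma hasDerivAt_GkC (k ξ : ℝ) : HasDerivAt (fun x : ℝ => GkC k x) (Gk' k ξ) ξ := by
  unfold GkC Gk'
  have h1 := (((hasDerivAt_exp_neg ξ).const_add (-1)).mul_const (Complex.I * k))
  have h2 := hasDerivAt_exp_Ik k ξ
  have := (h1.add h2).sub_const 1
  refine this.congr_deriv ?_
  ring

lemma hasDerivAt_Gk' (k ξ : ℝ) : HasDerivAt (fun x : ℝ => Gk' k x) (gk k ξ) ξ := by
  unfold Gk' gk
  have h1 := (hasDerivAt_exp_neg ξ).const_mul (-(Complex.I * k))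
  have h2 := (hasDerivAt_exp_Ik k ξ).const_mul (Complex.I * k)
  have := h1.add h2
  refine this.congr_deriv ?_
  have hI : Complex.I * Complex.I = -1 := Complex.I_mul_I
  linear_combination (k:ℂ)^2 * Complex.exp (Complex.I * k * ξ) * hI

lemma integral_GkC (k : ℝ) {ξ : ℝ} (hξ : 0 ≤ ξ) :
    ∫ u in (0:ℝ)..ξ, ((ξ - u : ℝ):ℂ) * gk k u = GkC k ξ := by
  have hderiv : ∀ u ∈ Set.uIcc (0:ℝ) ξ,
      HasDerivAt (fun u : ℝ => ((ξ - u : ℝ):ℂ) * Gk' k u + GkC k u)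
        (((ξ - u : ℝ):ℂ) * gk k u) u := by
    intro u _
    have h1 : HasDerivAt (fun u : ℝ => ((ξ - u : ℝ):ℂ)) (-1) u := by
      simp only [Complex.ofReal_sub]
      simpa using (hasDerivAt_coe u).const_sub (ξ:ℂ)
    have := (h1.mul (hasDerivAt_Gk' k u)).add (hasDerivAt_GkC k u)
    refine this.congr_deriv ?_
    ring
  have hcont : Continuous fun u : ℝ => ((ξ - u : ℝ):ℂ) * gk k u := by
    have := continuous_gk k
    fun_prop
  rw [intervalIntegral.integral_eq_sub_of_hasDerivAt hderiv (hcont.intervalIntegrable _ _)]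
  simp [Gk', GkC, Complex.exp_zero]

lemma norm_gk_le (k : ℝ) {u : ℝ} (hu : 0 ≤ u) : ‖gk k u‖ ≤ |k| + k ^ 2 := by
  unfold gk
  refine (norm_sub_le _ _).trans ?_
  have h1 : ‖Complex.I * k * Complex.exp (-(u:ℂ))‖ ≤ |k| := by
    have he : Complex.exp (-(u:ℂ)) = ((Real.exp (-u) : ℝ) : ℂ) := by
      rw [Complex.ofReal_exp]; push_cast; ring_nf
    rw [he, norm_mul, norm_mul, Complex.norm_I, one_mul, Complex.norm_real, Complex.norm_real,
      Real.norm_eq_abs, Real.norm_eq_abs, Real.abs_exp]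
    nlinarith [Real.exp_le_one_iff.mpr (neg_nonpos.mpr hu), Real.exp_pos (-u), abs_nonneg k]
  have h2 : ‖(k:ℂ)^2 * Complex.exp (Complex.I * k * u)‖ = k ^ 2 := by
    rw [norm_mul]
    have : Complex.I * k * u = ((k * u : ℝ) : ℂ) * Complex.I := by push_cast; ring
    rw [this, Complex.norm_exp_ofReal_mul_I, mul_one, norm_pow, Complex.norm_real,
      Real.norm_eq_abs, _root_.sq_abs]
  linarith [h1, h2.le]

lemma norm_GkC_le (k : ℝ) {ξ : ℝ} (hξ : 0 ≤ ξ) :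
    ‖GkC k ξ‖ ≤ (|k| + k ^ 2) * ξ ^ 2 := by
  rw [← integral_GkC k hξ]
  have := intervalIntegral.norm_integral_le_of_norm_le_const
    (C := (|k| + k ^ 2) * ξ) (f := fun u => ((ξ - u : ℝ):ℂ) * gk k u) (a := 0) (b := ξ) ?_
  · refine this.trans ?_
    rw [sub_zero, _root_.abs_of_nonneg hξ]
    exact le_of_eq (by ring)
  · intro u hu
    rw [Set.uIoc_of_le hξ] at hu
    rw [norm_mul, Complex.norm_real, Real.norm_eq_abs]
    have h1 : |ξ - u| ≤ ξ := by
      rw [_root_.abs_of_nonneg (by linarith [hu.2])]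
      linarith [hu.1]
    have h2 : ‖gk k u‖ ≤ |k| + k ^ 2 := norm_gk_le k hu.1.le
    calc |ξ - u| * ‖gk k u‖ ≤ ξ * (|k| + k ^ 2) := by
          apply mul_le_mul h1 h2 (norm_nonneg _) hξ
      _ = (|k| + k ^ 2) * ξ := by ring

/-- **Second equality in (42).** For measurable `φ̃` with `∫₀^∞ ξ²|φ̃(ξ)| dξ < ∞` and
second right-sided integral `(I²_-φ̃)(ξ) = ∫_ξ^∞ (u-ξ)φ̃(u) du`, both integrals
`∫₀^∞ φ̃(ξ)[(-1+e^{-ξ})(ik) + e^{ikξ} - 1] dξ` and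
`∫₀^∞ (I²_-φ̃)(ξ)[ik e^{-ξ} - k² e^{ikξ}] dξ` converge absolutely and are equal. -/
theorem stmt16 (φt : ℝ → ℝ) (hmeas : Measurable φt)
    (hint : IntegrableOn (fun ξ => ξ^2 * |φt ξ|) (Ioi (0:ℝ)))
    (I2 : ℝ → ℝ)
    (hI2 : ∀ ξ : ℝ, 0 < ξ → I2 ξ = ∫ u in Ioi ξ, (u - ξ) * φt u) :
    ∀ k : ℝ,
      IntegrableOn (fun ξ : ℝ => (φt ξ : ℂ) *
          (((-1 + Real.exp (-ξ) : ℝ) : ℂ) * (Complex.I * k) +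
            Complex.exp (Complex.I * k * ξ) - 1)) (Ioi (0:ℝ)) ∧
      IntegrableOn (fun ξ : ℝ => (I2 ξ : ℂ) *
          (Complex.I * k * Complex.exp (-(ξ:ℂ)) -
            (k:ℂ)^2 * Complex.exp (Complex.I * k * ξ))) (Ioi (0:ℝ)) ∧
      (∫ ξ in Ioi (0:ℝ), (φt ξ : ℂ) *
          (((-1 + Real.exp (-ξ) : ℝ) : ℂ) * (Complex.I * k) +
            Complex.exp (Complex.I * k * ξ) - 1))
        = ∫ ξ in Ioi (0:ℝ), (I2 ξ : ℂ) *
          (Complex.I * k * Complex.exp (-(ξ:ℂ)) -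
            (k:ℂ)^2 * Complex.exp (Complex.I * k * ξ)) := by
  intro k
  set μ := volume.restrict (Ioi (0:ℝ)) with hμ
  set C : ℝ := |k| + k ^ 2 with hC
  have hC0 : 0 ≤ C := by positivity
  set f : ℝ → ℝ → ℂ := fun ξ u => (Set.Ioo (0:ℝ) ξ).indicator
      (fun u => (φt ξ : ℂ) * (((ξ - u : ℝ):ℂ) * gk k u)) u with hfdef
  have hS : MeasurableSet {p : ℝ × ℝ | 0 < p.2 ∧ p.2 < p.1} :=
    (measurableSet_lt measurable_const measurable_snd).inter
      (measurableSet_lt measurable_snd measurable_fst)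
  have hFmeas : Measurable (fun p : ℝ × ℝ =>
      (φt p.1 : ℂ) * (((p.1 - p.2 : ℝ):ℂ) * gk k p.2)) := by
    apply Measurable.mul
    · exact Complex.measurable_ofReal.comp (hmeas.comp measurable_fst)
    · exact (Complex.measurable_ofReal.comp (measurable_fst.sub measurable_snd)).mul
        ((continuous_gk k).measurable.comp measurable_snd)
  have huncurry : Function.uncurry f = {p : ℝ × ℝ | 0 < p.2 ∧ p.2 < p.1}.indicator
      (fun p => (φt p.1 : ℂ) * (((p.1 - p.2 : ℝ):ℂ) * gk k p.2)) := by
    funext p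
    rcases p with ⟨ξ, u⟩
    simp only [Function.uncurry, hfdef, Set.indicator_apply, Set.mem_Ioo, Set.mem_setOf_eq]
  have hfm : AEStronglyMeasurable (Function.uncurry f) (μ.prod μ) := by
    rw [huncurry]
    exact (hFmeas.indicator hS).aestronglyMeasurable
  have hfi : Integrable (Function.uncurry f) (μ.prod μ) := by
    rw [integrable_prod_iff hfm]
    constructor
    · filter_upwards [self_mem_ae_restrict measurableSet_Ioi] with ξ hξ
      have hIO : IntegrableOn (fun u => (φt ξ : ℂ) * (((ξ - u : ℝ):ℂ) * gk k u))
          (Set.Ioo 0 ξ) volume := by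
        have hcont : Continuous fun u : ℝ => (φt ξ : ℂ) * (((ξ - u : ℝ):ℂ) * gk k u) := by
          have := continuous_gk k
          fun_prop
        exact (hcont.integrableOn_Icc (a := 0) (b := ξ)).mono_set Set.Ioo_subset_Icc_self
      have hIOμ : IntegrableOn (fun u => (φt ξ : ℂ) * (((ξ - u : ℝ):ℂ) * gk k u))
          (Set.Ioo 0 ξ) μ := by
        rw [IntegrableOn, hμ, Measure.restrict_restrict measurableSet_Ioo,
          inter_eq_left.mpr Set.Ioo_subset_Ioi_self]
        exact hIO
      exact hIOμ.integrable_indicator measurableSet_Ioo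
    · have hmaj : Integrable (fun ξ => C * (ξ^2 * |φt ξ|)) μ := hint.const_mul C
      apply Integrable.mono' hmaj (hfm.norm.integral_prod_right')
      filter_upwards [self_mem_ae_restrict measurableSet_Ioi] with ξ hξ
      have hμIoo : μ (Set.Ioo 0 ξ) = ENNReal.ofReal ξ := by
        rw [hμ, Measure.restrict_apply measurableSet_Ioo,
          inter_eq_left.mpr Set.Ioo_subset_Ioi_self, Real.volume_Ioo, sub_zero]
      have hb : ∀ u, ‖f ξ u‖ ≤ (Set.Ioo (0:ℝ) ξ).indicator (fun _ => |φt ξ| * ξ * C) u := by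
        intro u
        by_cases h : u ∈ Set.Ioo (0:ℝ) ξ
        · rw [hfdef]
          simp only [Set.indicator_of_mem h]
          rw [norm_mul, norm_mul, Complex.norm_real, Complex.norm_real,
            Real.norm_eq_abs, Real.norm_eq_abs]
          have h1 : |ξ - u| ≤ ξ := by
            rw [_root_.abs_of_nonneg (by linarith [h.2])]
            linarith [h.1]
          have h2 : ‖gk k u‖ ≤ C := norm_gk_le k h.1.le
          calc |φt ξ| * (|ξ - u| * ‖gk k u‖) ≤ |φt ξ| * (ξ * C) := by
                apply mul_le_mul_of_nonneg_left _ (abs_nonneg _)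
                apply mul_le_mul h1 h2 (norm_nonneg _) (by linarith [h.1, h.2] : (0:ℝ) ≤ ξ)
            _ = |φt ξ| * ξ * C := by ring
        · rw [hfdef]
          simp only [Set.indicator_of_notMem h, norm_zero]
          exact le_refl _
      rw [Real.norm_eq_abs,
        _root_.abs_of_nonneg (integral_nonneg (fun u => norm_nonneg _))]
      calc (∫ u, ‖f ξ u‖ ∂μ)
          ≤ ∫ u, (Set.Ioo (0:ℝ) ξ).indicator (fun _ => |φt ξ| * ξ * C) u ∂μ := by
            apply integral_mono_of_nonneg
            · exact Filter.Eventually.of_forall fun u => norm_nonneg _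
            · refine (integrable_indicator_iff measurableSet_Ioo).mpr ?_
              refine (integrableOn_const_iff).mpr (Or.inr ?_)
              rw [hμIoo]; exact ENNReal.ofReal_lt_top
            · exact Filter.Eventually.of_forall hb
        _ = (μ (Set.Ioo 0 ξ)).toReal • (|φt ξ| * ξ * C) := by
            rw [integral_indicator measurableSet_Ioo, setIntegral_const, measureReal_def]
        _ ≤ C * (ξ^2 * |φt ξ|) := by
            rw [hμIoo, ENNReal.toReal_ofReal (le_of_lt hξ), smul_eq_mul]
            exact le_of_eq (by ring)
  have hGkCeq : ∀ ξ : ℝ,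
      ((-1 + Real.exp (-ξ) : ℝ) : ℂ) * (Complex.I * k) +
        Complex.exp (Complex.I * k * ξ) - 1 = GkC k ξ := by
    intro ξ
    unfold GkC
    push_cast [Complex.ofReal_exp]
    ring_nf
  have hLeq : ∀ᵐ ξ ∂μ, (∫ u, f ξ u ∂μ) =
      (φt ξ : ℂ) * (((-1 + Real.exp (-ξ) : ℝ) : ℂ) * (Complex.I * k) +
        Complex.exp (Complex.I * k * ξ) - 1) := by
    filter_upwards [self_mem_ae_restrict measurableSet_Ioi] with ξ hξ
    rw [hGkCeq]
    calc (∫ u, f ξ u ∂μ)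
        = ∫ u in Set.Ioo 0 ξ, (φt ξ : ℂ) * (((ξ - u : ℝ):ℂ) * gk k u) ∂μ := by
          rw [hfdef, integral_indicator measurableSet_Ioo]
      _ = ∫ u in Set.Ioo 0 ξ, (φt ξ : ℂ) * (((ξ - u : ℝ):ℂ) * gk k u) := by
          rw [hμ, Measure.restrict_restrict measurableSet_Ioo,
            inter_eq_left.mpr Set.Ioo_subset_Ioi_self]
      _ = (φt ξ : ℂ) * ∫ u in Set.Ioo 0 ξ, ((ξ - u : ℝ):ℂ) * gk k u :=
          integral_const_mul _ _
      _ = (φt ξ : ℂ) * GkC k ξ := by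
          congr 1
          rw [← MeasureTheory.integral_Ioc_eq_integral_Ioo,
            ← intervalIntegral.integral_of_le (le_of_lt hξ)]
          exact integral_GkC k (le_of_lt hξ)
  have hReq : ∀ᵐ u ∂μ, (∫ ξ, f ξ u ∂μ) = (I2 u : ℂ) * gk k u := by
    filter_upwards [self_mem_ae_restrict measurableSet_Ioi] with u hu
    have hind : ∀ ξ, f ξ u =
        (Set.Ioi u).indicator (fun ξ => (φt ξ : ℂ) * (((ξ - u : ℝ):ℂ) * gk k u)) ξ := by
      intro ξ
      rw [hfdef]
      have hu0 : (0:ℝ) < u := hu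
      by_cases h : u < ξ
      · simp [Set.indicator_apply, Set.mem_Ioo, Set.mem_Ioi, h, hu0]
      · simp [Set.indicator_apply, Set.mem_Ioo, Set.mem_Ioi, h]
    calc (∫ ξ, f ξ u ∂μ)
        = ∫ ξ in Set.Ioi u, (φt ξ : ℂ) * (((ξ - u : ℝ):ℂ) * gk k u) ∂μ := by
          simp_rw [hind]
          exact integral_indicator measurableSet_Ioi
      _ = ∫ ξ in Set.Ioi u, (φt ξ : ℂ) * (((ξ - u : ℝ):ℂ) * gk k u) := by
          rw [hμ, Measure.restrict_restrict measurableSet_Ioi,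
            inter_eq_left.mpr (Set.Ioi_subset_Ioi (le_of_lt hu))]
      _ = ∫ ξ in Set.Ioi u, ((((ξ - u) * φt ξ : ℝ)) : ℂ) * gk k u := by
          apply integral_congr_ae
          filter_upwards with ξ
          push_cast
          ring
      _ = (↑(∫ ξ in Set.Ioi u, (ξ - u) * φt ξ) : ℂ) * gk k u := by
          rw [integral_mul_const]
          congr 1
          exact integral_ofReal
      _ = (I2 u : ℂ) * gk k u := by rw [hI2 u hu]
  have hL_int : Integrable (fun ξ => ∫ u, f ξ u ∂μ) μ := hfi.integral_prod_left
  have hR_int : Integrable (fun u => ∫ ξ, f ξ u ∂μ) μ := hfi.integral_prod_right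
  refine ⟨hL_int.congr hLeq, hR_int.congr hReq, ?_⟩
  calc (∫ ξ in Ioi (0:ℝ), (φt ξ : ℂ) *
          (((-1 + Real.exp (-ξ) : ℝ) : ℂ) * (Complex.I * k) +
            Complex.exp (Complex.I * k * ξ) - 1))
      = ∫ ξ, (∫ u, f ξ u ∂μ) ∂μ := (integral_congr_ae hLeq).symm
    _ = ∫ u, (∫ ξ, f ξ u ∂μ) ∂μ := integral_integral_swap hfi
    _ = ∫ u in Ioi (0:ℝ), (I2 u : ℂ) * gk k u := integral_congr_ae hReq
    _ = _ := by rfl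
end
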